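/- arXiv:2602.00905 — 6 statements merged into one kernel-verified Lean document; each statement's English description precedes it below -/
import Mathlib

section
/- Let p2, p3, ψ40, k1 be positive real constants and define ψ3(q2) = cos(q2) / (k1 + (p2/(p3·ψ40))·sin²(q2)). Then for every q2 ∈ (-π/2, π/2), ψ3 is differentiable at q2 and satisfies the Riccati equation ψ3'(q2) = -tan(q2)·ψ3(q2) - (2·p2/(p3·ψ40))·sin(q2)·ψ3(q2)². -/
open Real

/-- the function ψ3(q2) = cos(q2)/(k1 + (p2/(p3·ψ40))·sin²(q2)) is
differentiable on (-π/2, π/2) and satisfies the Riccati equation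
ψ3' = -tan(q2)·ψ3 - (2·p2/(p3·ψ40))·sin(q2)·ψ3². -/
theorem stmt0 (p2 p3 ψ40 k1 : ℝ) (hp2 : 0 < p2) (hp3 : 0 < p3)
    (hψ40 : 0 < ψ40) (hk1 : 0 < k1)
    (ψ3 : ℝ → ℝ)
    (hψ3 : ∀ q2, ψ3 q2 = cos q2 / (k1 + p2 / (p3 * ψ40) * sin q2 ^ 2)) :
    ∀ q2 ∈ Set.Ioo (-(π / 2)) (π / 2),
      HasDerivAt ψ3
        (-tan q2 * ψ3 q2 - 2 * p2 / (p3 * ψ40) * sin q2 * ψ3 q2 ^ 2) q2 := by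
  have ha : 0 < p2 / (p3 * ψ40) := div_pos hp2 (mul_pos hp3 hψ40)
  set a := p2 / (p3 * ψ40) with hadef
  have heq : ψ3 = fun q2 => cos q2 / (k1 + a * sin q2 ^ 2) := funext hψ3
  subst heq
  intro q2 hq
  have hcos : 0 < cos q2 := Real.cos_pos_of_mem_Ioo hq
  have hD : 0 < k1 + a * sin q2 ^ 2 := by positivity
  have h1 : HasDerivAt (fun x => cos x / (k1 + a * sin x ^ 2))
      ((-sin q2 * (k1 + a * sin q2 ^ 2) -
        cos q2 * (a * (2 * sin q2 ^ 1 * cos q2))) / (k1 + a * sin q2 ^ 2) ^ 2) q2 := by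
    exact (hasDerivAt_cos q2).div
      ((((hasDerivAt_sin q2).pow 2).const_mul a).const_add k1) hD.ne'
  convert h1 using 1
  rw [tan_eq_sin_div_cos]
  have h3 : p3 ≠ 0 := hp3.ne'
  have h4 : ψ40 ≠ 0 := hψ40.ne'
  rw [hadef]
  field_simp
end

section
/- Let η : (-π/2, π/2) → ℝ be differentiable and suppose η'(q2) = η(q2)·tan(q2) + (2·p2/(p3·ψ40))·sin(q2) for all q2 ∈ (-π/2, π/2), where p2, p3, ψ40 are positive real constants. Then there exists a real constant C such that η(q2) = (C + (p2/(p3·ψ40))·sin²(q2)) / cos(q2) for all q2 ∈ (-π/2, π/2). -/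
open Real

/-- any differentiable solution on (-π/2, π/2) of the linear ODE
η' = η·tan + (2·p2/(p3·ψ40))·sin has the form
η(q2) = (C + (p2/(p3·ψ40))·sin²(q2))/cos(q2) for some constant C. -/
theorem stmt5 (p2 p3 ψ40 : ℝ) (hp2 : 0 < p2) (hp3 : 0 < p3) (hψ40 : 0 < ψ40)
    (η : ℝ → ℝ)
    (hη : ∀ q2 ∈ Set.Ioo (-(π / 2)) (π / 2),
      HasDerivAt η (η q2 * tan q2 + 2 * p2 / (p3 * ψ40) * sin q2) q2) :
    ∃ C : ℝ, ∀ q2 ∈ Set.Ioo (-(π / 2)) (π / 2),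
      η q2 = (C + p2 / (p3 * ψ40) * sin q2 ^ 2) / cos q2 := by
  set k : ℝ := p2 / (p3 * ψ40) with hk
  set g : ℝ → ℝ := fun x => η x * cos x - k * sin x ^ 2 with hg
  set s := Set.Ioo (-(π / 2)) (π / 2) with hs
  have hcos : ∀ x ∈ s, 0 < cos x := fun x hx => Real.cos_pos_of_mem_Ioo hx
  have hderiv : ∀ x ∈ s, HasDerivAt g 0 x := by
    intro x hx
    have h1 : HasDerivAt (fun x => η x * cos x)
        ((η x * tan x + 2 * k * sin x) * cos x + η x * (-sin x)) x := by
      have := (hη x hx).fun_mul (Real.hasDerivAt_cos x)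
      convert! this using 1
      ring
    have h2 : HasDerivAt (fun x => k * sin x ^ 2) (k * (2 * sin x * cos x)) x := by
      have := ((Real.hasDerivAt_sin x).fun_pow 2).const_mul k
      convert! this using 1
      ring
    have := h1.sub h2
    convert! this using 1
    have hc : cos x ≠ 0 := ne_of_gt (hcos x hx)
    rw [Real.tan_eq_sin_div_cos]
    field_simp
    ring
  have hconv : Convex ℝ s := convex_Ioo _ _
  have h0 : (0 : ℝ) ∈ s := by
    constructor <;> simp [Real.pi_pos] <;> positivity
  refine ⟨g 0, fun x hx => ?_⟩
  have hconst : g x = g 0 := by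
    apply hconv.is_const_of_fderivWithin_eq_zero
      (fun y hy => ((hderiv y hy).differentiableAt).differentiableWithinAt) _ hx h0
    intro y hy
    rw [fderivWithin_eq_fderiv (isOpen_Ioo.uniqueDiffOn y hy)
      (hderiv y hy).differentiableAt]
    have := (hderiv y hy).deriv
    ext z
    simp [← toSpanSingleton_deriv, this]
  have hc : cos x ≠ 0 := ne_of_gt (hcos x hx)
  have : η x * cos x - k * sin x ^ 2 = g 0 := hconst
  field_simp
  linarith
end

section
/- Let p2, p3, p5, ψ40, k1, κ be positive real constants. Define ψ3(q2) = cos(q2) / (k1 + (p2/(p3·ψ40))·sin²(q2)) and V_d(q1, q2) = (κ/2)·( q1 + sqrt(p3/(k1·p2·ψ40))·arctan( sqrt(p2/(k1·p3·ψ40))·sin(q2) ) )² - (p5/ψ40)·cos(q2). Then for all (q1, q2) ∈ ℝ², the potential matching PDE holds: -p5·sin(q2) = ψ3(q2)·(∂V_d/∂q1)(q1, q2) - ψ40·(∂V_d/∂q2)(q1, q2). -/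
open Real

/-- the shaped potential energy V_d of Theorem 1 satisfies the
potential matching PDE  -p5·sin(q2) = ψ3(q2)·∂V_d/∂q1 - ψ40·∂V_d/∂q2  on ℝ². -/
theorem stmt6 (p2 p3 p5 ψ40 k1 κ : ℝ) (hp2 : 0 < p2) (hp3 : 0 < p3)
    (hp5 : 0 < p5) (hψ40 : 0 < ψ40) (hk1 : 0 < k1) (hκ : 0 < κ)
    (ψ3 : ℝ → ℝ)
    (hψ3 : ∀ q2, ψ3 q2 = cos q2 / (k1 + p2 / (p3 * ψ40) * sin q2 ^ 2))
    (Vd : ℝ → ℝ → ℝ)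
    (hVd : ∀ q1 q2, Vd q1 q2 =
      κ / 2 * (q1 + sqrt (p3 / (k1 * p2 * ψ40))
          * arctan (sqrt (p2 / (k1 * p3 * ψ40)) * sin q2)) ^ 2
        - p5 / ψ40 * cos q2) :
    ∀ q1 q2 : ℝ,
      -p5 * sin q2 =
        ψ3 q2 * deriv (fun x => Vd x q2) q1 - ψ40 * deriv (fun y => Vd q1 y) q2 := by
  intro q1 q2
  set a : ℝ := sqrt (p3 / (k1 * p2 * ψ40)) with ha
  set b : ℝ := sqrt (p2 / (k1 * p3 * ψ40)) with hb
  have hab : a * b = 1 / (k1 * ψ40) := by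
    rw [ha, hb, ← Real.sqrt_mul (by positivity)]
    have : p3 / (k1 * p2 * ψ40) * (p2 / (k1 * p3 * ψ40)) = (1 / (k1 * ψ40)) ^ 2 := by
      field_simp
    rw [this, Real.sqrt_sq (by positivity)]
  have hb2 : b ^ 2 = p2 / (k1 * p3 * ψ40) := Real.sq_sqrt (by positivity)
  set S : ℝ := q1 + a * arctan (b * sin q2) with hS
  -- derivative in q1
  have hd1 : HasDerivAt (fun x => Vd x q2) (κ * S) q1 := by
    have h : HasDerivAt (fun x : ℝ => κ / 2 * (x + a * arctan (b * sin q2)) ^ 2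
        - p5 / ψ40 * cos q2) (κ * S) q1 := by
      have h1 : HasDerivAt (fun x : ℝ => (x + a * arctan (b * sin q2)) ^ 2)
          (2 * S ^ 1 * 1) q1 := ((hasDerivAt_id q1).add_const _).pow 2
      have := (h1.const_mul (κ / 2)).sub_const (p5 / ψ40 * cos q2)
      exact this.congr_deriv (by ring)
    exact h.congr_of_eventuallyEq (by filter_upwards with x; rw [hVd])
  -- derivative in q2
  have hd2 : HasDerivAt (fun y => Vd q1 y)
      (κ * S * (a * (b * cos q2 / (1 + (b * sin q2) ^ 2))) + p5 / ψ40 * sin q2) q2 := by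
    have hsin : HasDerivAt (fun y : ℝ => b * sin y) (b * cos q2) q2 :=
      (Real.hasDerivAt_sin q2).const_mul b
    have harc : HasDerivAt (fun y : ℝ => arctan (b * sin y))
        (1 / (1 + (b * sin q2) ^ 2) * (b * cos q2)) q2 :=
      hsin.arctan
    have h1 : HasDerivAt (fun y : ℝ => (q1 + a * arctan (b * sin y)) ^ 2)
        (2 * S ^ 1 * (a * (1 / (1 + (b * sin q2) ^ 2) * (b * cos q2)))) q2 :=
      ((harc.const_mul a).const_add q1).pow 2
    have hcos : HasDerivAt (fun y : ℝ => p5 / ψ40 * cos y)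
        (p5 / ψ40 * (-sin q2)) q2 := (Real.hasDerivAt_cos q2).const_mul _
    have h : HasDerivAt (fun y : ℝ => κ / 2 * (q1 + a * arctan (b * sin y)) ^ 2
        - p5 / ψ40 * cos y)
        (κ * S * (a * (b * cos q2 / (1 + (b * sin q2) ^ 2))) + p5 / ψ40 * sin q2) q2 := by
      have := (h1.const_mul (κ / 2)).sub hcos
      exact this.congr_deriv (by ring)
    exact h.congr_of_eventuallyEq (by filter_upwards with y; rw [hVd])
  rw [hd1.deriv, hd2.deriv, hψ3]
  have hden : 1 + (b * sin q2) ^ 2 ≠ 0 := by positivity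
  have hden2 : k1 + p2 / (p3 * ψ40) * sin q2 ^ 2 ≠ 0 := by positivity
  have key : k1 + p2 / (p3 * ψ40) * sin q2 ^ 2 = k1 * (1 + (b * sin q2) ^ 2) := by
    rw [mul_pow, hb2]; field_simp
  rw [key]
  have habk : a * b * (k1 * ψ40) = 1 := by rw [hab]; field_simp
  field_simp
  linear_combination (κ * S * cos q2) * habk
end

section
/- Let p2, p3, ψ40, k1 be positive real constants. Define ψ3(q2) = cos(q2) / (k1 + (p2/(p3·ψ40))·sin²(q2)) and z(q1, q2) = q1 + sqrt(p3/(k1·p2·ψ40))·arctan( sqrt(p2/(k1·p3·ψ40))·sin(q2) ). Then for all (q1, q2) ∈ ℝ², ψ3(q2)·(∂z/∂q1)(q1, q2) - ψ40·(∂z/∂q2)(q1, q2) = 0. -/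
open Real

/-- the characteristic invariant z of the potential matching PDE
satisfies ψ3(q2)·∂z/∂q1 - ψ40·∂z/∂q2 = 0 on ℝ². -/
theorem stmt7 (p2 p3 ψ40 k1 : ℝ) (hp2 : 0 < p2) (hp3 : 0 < p3)
    (hψ40 : 0 < ψ40) (hk1 : 0 < k1)
    (ψ3 : ℝ → ℝ)
    (hψ3 : ∀ q2, ψ3 q2 = cos q2 / (k1 + p2 / (p3 * ψ40) * sin q2 ^ 2))
    (z : ℝ → ℝ → ℝ)
    (hz : ∀ q1 q2, z q1 q2 =
      q1 + sqrt (p3 / (k1 * p2 * ψ40))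
        * arctan (sqrt (p2 / (k1 * p3 * ψ40)) * sin q2)) :
    ∀ q1 q2 : ℝ,
      ψ3 q2 * deriv (fun x => z x q2) q1 - ψ40 * deriv (fun y => z q1 y) q2 = 0 := by
  intro q1 q2
  set a := sqrt (p3 / (k1 * p2 * ψ40)) with ha
  set b := sqrt (p2 / (k1 * p3 * ψ40)) with hb
  have hd1 : deriv (fun x => z x q2) q1 = 1 := by
    have : (fun x => z x q2) = fun x => x + a * arctan (b * sin q2) := by
      funext x; rw [hz]
    rw [this, deriv_add_const]
    simp
  have hd2 : HasDerivAt (fun y => z q1 y)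
      (a * ((1 / (1 + (b * sin q2) ^ 2)) * (b * cos q2))) q2 := by
    have h1 : HasDerivAt (fun y : ℝ => b * sin y) (b * cos q2) q2 :=
      (hasDerivAt_sin q2).const_mul b
    have h2 := (Real.hasDerivAt_arctan (b * sin q2)).comp q2 h1
    have h3 := h2.const_mul a
    have : (fun y => z q1 y) = fun y => q1 + a * arctan (b * sin y) := by
      funext y; rw [hz]
    rw [this]
    exact h3.const_add q1
  rw [hd1, hd2.deriv, hψ3]
  have hab : a * b = 1 / (k1 * ψ40) := by
    rw [ha, hb, ← Real.sqrt_mul (by positivity)]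
    rw [show p3 / (k1 * p2 * ψ40) * (p2 / (k1 * p3 * ψ40)) = (1 / (k1 * ψ40)) ^ 2 by
      field_simp]
    exact Real.sqrt_sq (by positivity)
  have hb2 : b ^ 2 = p2 / (k1 * p3 * ψ40) := Real.sq_sqrt (by positivity)
  have hden1 : k1 + p2 / (p3 * ψ40) * sin q2 ^ 2 > 0 := by positivity
  have hden2 : 1 + (b * sin q2) ^ 2 > 0 := by positivity
  have key : a * ((1 / (1 + (b * sin q2) ^ 2)) * (b * cos q2)) =
      (a * b) * cos q2 / (1 + b ^ 2 * sin q2 ^ 2) := by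
    field_simp
  rw [key, hab, hb2]
  have hden3 : (0:ℝ) < 1 + p2 / (k1 * p3 * ψ40) * sin q2 ^ 2 := by positivity
  field_simp
  ring
end

section
/- Let p2, p3, p5, ψ40, k1, κ be positive real constants and define V_d(q1, q2) = (κ/2)·( q1 + sqrt(p3/(k1·p2·ψ40))·arctan( sqrt(p2/(k1·p3·ψ40))·sin(q2) ) )² - (p5/ψ40)·cos(q2). Then the Hessian matrix of V_d at (0,0) equals the 2×2 matrix [[κ, κ/(k1·ψ40)], [κ/(k1·ψ40), κ/(k1·ψ40)² + p5/ψ40]], and this matrix is positive definite. -/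
open Real

private lemma hf_deriv (a b y : ℝ) :
    HasDerivAt (fun t => a * arctan (b * sin t))
      (a * (1 / (1 + (b * sin y) ^ 2) * (b * cos y))) y := by
  have h1 : HasDerivAt (fun t => b * sin t) (b * cos y) y :=
    (Real.hasDerivAt_sin y).const_mul b
  exact ((Real.hasDerivAt_arctan (b * sin y)).comp y h1).const_mul a

/-- the Hessian of the shaped potential energy V_d at (0,0) equals
[[κ, κ/(k1·ψ40)], [κ/(k1·ψ40), κ/(k1·ψ40)² + p5/ψ40]], and this matrix is
positive definite. -/
theorem stmt8 (p2 p3 p5 ψ40 k1 κ : ℝ) (hp2 : 0 < p2) (hp3 : 0 < p3)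
    (hp5 : 0 < p5) (hψ40 : 0 < ψ40) (hk1 : 0 < k1) (hκ : 0 < κ)
    (Vd : ℝ → ℝ → ℝ)
    (hVd : ∀ q1 q2, Vd q1 q2 =
      κ / 2 * (q1 + sqrt (p3 / (k1 * p2 * ψ40))
          * arctan (sqrt (p2 / (k1 * p3 * ψ40)) * sin q2)) ^ 2
        - p5 / ψ40 * cos q2) :
    (!![deriv (fun x => deriv (fun u => Vd u 0) x) 0,
        deriv (fun x => deriv (fun v => Vd x v) 0) 0;
        deriv (fun y => deriv (fun u => Vd u y) 0) 0,
        deriv (fun y => deriv (fun v => Vd 0 v) y) 0] : Matrix (Fin 2) (Fin 2) ℝ)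
      = !![κ, κ / (k1 * ψ40);
           κ / (k1 * ψ40), κ / (k1 * ψ40) ^ 2 + p5 / ψ40] ∧
    (!![κ, κ / (k1 * ψ40);
        κ / (k1 * ψ40), κ / (k1 * ψ40) ^ 2 + p5 / ψ40] : Matrix (Fin 2) (Fin 2) ℝ).PosDef := by
  set a := sqrt (p3 / (k1 * p2 * ψ40)) with ha
  set b := sqrt (p2 / (k1 * p3 * ψ40)) with hb
  set f : ℝ → ℝ := fun t => a * arctan (b * sin t) with hf
  have hab : a * b = 1 / (k1 * ψ40) := by
    rw [ha, hb, ← Real.sqrt_mul (by positivity),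
      show p3 / (k1 * p2 * ψ40) * (p2 / (k1 * p3 * ψ40)) = (1 / (k1 * ψ40)) ^ 2 by
        field_simp]
    exact Real.sqrt_sq (by positivity)
  have hf0 : f 0 = 0 := by simp [hf]
  -- derivative of Vd in the first variable
  have hinner1 : ∀ y x, HasDerivAt (fun u => Vd u y) (κ * (x + f y)) x := by
    intro y x
    have heq : (fun u => Vd u y) = fun u => κ / 2 * (u + f y) ^ 2 - p5 / ψ40 * cos y :=
      funext fun u => hVd u y
    rw [heq]
    have h : HasDerivAt (fun u => κ / 2 * (u + f y) ^ 2 - p5 / ψ40 * cos y) _ x :=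
      (((hasDerivAt_id' (x := x)).add_const (f y)).pow 2).const_mul (κ / 2)
            |>.sub_const (p5 / ψ40 * cos y)
    convert h using 1; push_cast; ring
  -- derivative of Vd in the second variable
  have hinner2 : ∀ x y, HasDerivAt (fun v => Vd x v)
      (κ * (x + f y) * (a * (1 / (1 + (b * sin y) ^ 2) * (b * cos y))) + p5 / ψ40 * sin y) y := by
    intro x y
    have heq : (fun v => Vd x v) = fun v => κ / 2 * (x + f v) ^ 2 - p5 / ψ40 * cos v :=
      funext fun v => hVd x v
    rw [heq]
    have h1 := (((hf_deriv a b y).const_add x).pow 2).const_mul (κ / 2)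
    have h2 := (Real.hasDerivAt_cos y).const_mul (p5 / ψ40)
    have h12 : HasDerivAt (fun v => κ / 2 * (x + f v) ^ 2 - p5 / ψ40 * cos v) _ y := h1.sub h2
    convert h12 using 1
    ring
  have e00 : deriv (fun x => deriv (fun u => Vd u 0) x) 0 = κ := by
    have heq : (fun x => deriv (fun u => Vd u 0) x) = fun x => κ * (x + f 0) :=
      funext fun x => (hinner1 0 x).deriv
    rw [heq]
    have h := (((hasDerivAt_id' (x := (0:ℝ))).add_const (f 0)).const_mul κ).deriv
    rw [h]; ring
  have e10 : deriv (fun y => deriv (fun u => Vd u y) 0) 0 = κ / (k1 * ψ40) := by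
    have heq : (fun y => deriv (fun u => Vd u y) 0) = fun y => κ * (0 + f y) :=
      funext fun y => (hinner1 y 0).deriv
    rw [heq]
    have h := (((hf_deriv a b 0).const_add 0).const_mul κ).deriv
    rw [h]
    simp
    rw [hab]; ring
  have e01 : deriv (fun x => deriv (fun v => Vd x v) 0) 0 = κ / (k1 * ψ40) := by
    have heq : (fun x => deriv (fun v => Vd x v) 0) =
        fun x => κ * (x + f 0) * (a * (1 / (1 + (b * sin 0) ^ 2) * (b * cos 0)))
          + p5 / ψ40 * sin 0 :=
      funext fun x => (hinner2 x 0).deriv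
    rw [heq]
    have h := ((((hasDerivAt_id' (x := (0:ℝ))).add_const (f 0)).const_mul κ).mul_const
        (a * (1 / (1 + (b * sin 0) ^ 2) * (b * cos 0)))).add_const (p5 / ψ40 * sin 0) |>.deriv
    rw [h]
    simp
    rw [hab]; ring
  have e11 : deriv (fun y => deriv (fun v => Vd 0 v) y) 0
      = κ / (k1 * ψ40) ^ 2 + p5 / ψ40 := by
    have heq : (fun y => deriv (fun v => Vd 0 v) y) =
        fun y => κ * (0 + f y) * (a * (1 / (1 + (b * sin y) ^ 2) * (b * cos y)))
          + p5 / ψ40 * sin y :=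
      funext fun y => (hinner2 0 y).deriv
    rw [heq]
    -- derivative of the second factor at 0
    have hn : HasDerivAt (fun y => a * (b * cos y)) (a * (b * (-sin 0))) 0 :=
      ((Real.hasDerivAt_cos 0).const_mul b).const_mul a
    have hd : HasDerivAt (fun y => 1 + (b * sin y) ^ 2)
        (2 * (b * sin 0) ^ 1 * (b * cos 0)) 0 :=
      (((Real.hasDerivAt_sin 0).const_mul b).pow 2).const_add 1
    have hden : (1 + (b * sin 0) ^ 2) ≠ 0 := by simp
    have hv : HasDerivAt (fun y => (a * (b * cos y)) / (1 + (b * sin y) ^ 2)) _ 0 := hn.div hd hden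
    have hveq : (fun y => a * (1 / (1 + (b * sin y) ^ 2) * (b * cos y)))
        = fun y => (a * (b * cos y)) / (1 + (b * sin y) ^ 2) := by
      funext y; field_simp
    have hu : HasDerivAt (fun y => κ * (0 + f y))
        (κ * (a * (1 / (1 + (b * sin 0) ^ 2) * (b * cos 0)))) 0 :=
      ((hf_deriv a b 0).const_add 0).const_mul κ
    have hprod : HasDerivAt (fun y => κ * (0 + f y) * (a * (1 / (1 + (b * sin y) ^ 2) * (b * cos y)))
        + p5 / ψ40 * sin y) _ 0 := (hu.mul (hveq ▸ hv)).add ((Real.hasDerivAt_sin 0).const_mul (p5 / ψ40))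
    rw [hprod.deriv]
    simp [hf0]
    rw [hab]; ring
  refine ⟨by rw [e00, e01, e10, e11], ?_⟩
  constructor
  · ext i j
    fin_cases i <;> fin_cases j <;> simp [Matrix.conjTranspose_apply]
  · intro x hx
    have hx01 : x 0 ≠ 0 ∨ x 1 ≠ 0 := by
      by_contra h
      push_neg at h
      exact hx (Finsupp.ext fun i => by fin_cases i <;> simp [h.1, h.2])
    have ht : (0:ℝ) < k1 * ψ40 := by positivity
    simp [Finsupp.sum_fintype, Fin.sum_univ_two]
    have key : x 0 * κ * x 0 + x 0 * (κ / (k1 * ψ40)) * x 1 +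
        (x 1 * (κ / (k1 * ψ40)) * x 0 + x 1 * (κ / (k1 * ψ40) ^ 2 + p5 / ψ40) * x 1)
        = (κ * (k1 * ψ40 * x 0 + x 1) ^ 2 + (p5 / ψ40) * (k1 * ψ40) ^ 2 * (x 1) ^ 2)
          / (k1 * ψ40) ^ 2 := by
      field_simp; ring
    rw [key]
    apply div_pos _ (by positivity)
    rcases hx01 with h0 | h1
    · rcases eq_or_ne (x 1) 0 with h1 | h1
      · have : k1 * ψ40 * x 0 + x 1 ≠ 0 := by
          rw [h1, add_zero]; exact mul_ne_zero ht.ne' h0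
        have h2 : 0 < (k1 * ψ40 * x 0 + x 1) ^ 2 := sq_pos_of_ne_zero this
        have h3 := mul_pos hκ h2
        have h4 := mul_nonneg (mul_pos (div_pos hp5 hψ40) (pow_pos ht 2)).le
          (sq_nonneg (x 1))
        linarith
      · have h2 : 0 < (x 1) ^ 2 := by positivity
        have h3 := mul_pos (mul_pos (div_pos hp5 hψ40) (pow_pos ht 2)) h2
        have h4 := mul_nonneg hκ.le (sq_nonneg (k1 * ψ40 * x 0 + x 1))
        linarith [mul_assoc (p5 / ψ40) ((k1 * ψ40) ^ 2) ((x 1) ^ 2)]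
    · have h2 : 0 < (x 1) ^ 2 := by positivity
      have h3 := mul_pos (mul_pos (div_pos hp5 hψ40) (pow_pos ht 2)) h2
      have h4 := mul_nonneg hκ.le (sq_nonneg (k1 * ψ40 * x 0 + x 1))
      linarith [mul_assoc (p5 / ψ40) ((k1 * ψ40) ^ 2) ((x 1) ^ 2)]
end

section
/- Let n, m be positive natural numbers, J an open interval, and let q, p : J → ℝⁿ be differentiable. Let H_d : ℝⁿ × ℝⁿ → ℝ be continuously differentiable with partial gradients ∇_q H_d and ∇_p H_d. Let M, M_d : J → Matrix n n ℝ be such that for each t ∈ J, M(t) and M_d(t) are symmetric and invertible, let J₂ : J → Matrix n n ℝ satisfy J₂(t)ᵀ = -J₂(t) for all t, let G be a constant n×m real matrix and K_v a symmetric m×m real matrix. Suppose that for all t ∈ J: q'(t) = M(t)⁻¹·M_d(t)·∇_p H_d(q(t), p(t)) and p'(t) = -M_d(t)·M(t)⁻¹·∇_q H_d(q(t), p(t)) + (J₂(t) - G·K_v·Gᵀ)·∇_p H_d(q(t), p(t)). Then for all t ∈ J, the derivative of t ↦ H_d(q(t), p(t)) equals -(∇_p H_d(q(t), p(t)))ᵀ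 · G·K_v·Gᵀ · ∇_p H_d(q(t), p(t)). -/
open Matrix

/-- energy-dissipation identity for the IDA-PBC closed loop (2):
along trajectories of q' = M⁻¹·M_d·∇ₚH_d,
p' = -M_d·M⁻¹·∇_qH_d + (J₂ - G·K_v·Gᵀ)·∇ₚH_d, with M, M_d symmetric invertible,
J₂ skew-symmetric, G constant and K_v symmetric, the desired energy satisfies
(d/dt) H_d(q,p) = -(∇ₚH_d)ᵀ·G·K_v·Gᵀ·∇ₚH_d. -/
theorem stmt16 (n m : ℕ) (hn : 0 < n) (hm : 0 < m)
    (J : Set ℝ) (hJopen : IsOpen J) (hJinterval : J.OrdConnected)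
    (q p : ℝ → (Fin n → ℝ))
    (hq : ∀ t ∈ J, DifferentiableAt ℝ q t) (hp : ∀ t ∈ J, DifferentiableAt ℝ p t)
    (Hd : (Fin n → ℝ) → (Fin n → ℝ) → ℝ)
    (hHdC1 : ContDiff ℝ 1 (fun z : (Fin n → ℝ) × (Fin n → ℝ) => Hd z.1 z.2))
    (gradq gradp : (Fin n → ℝ) → (Fin n → ℝ) → (Fin n → ℝ))
    (hgrad : ∀ x y u v : Fin n → ℝ,
      fderiv ℝ (fun z : (Fin n → ℝ) × (Fin n → ℝ) => Hd z.1 z.2) (x, y) (u, v)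
        = gradq x y ⬝ᵥ u + gradp x y ⬝ᵥ v)
    (M Md : ℝ → Matrix (Fin n) (Fin n) ℝ)
    (hMsymm : ∀ t ∈ J, (M t).IsSymm) (hMinv : ∀ t ∈ J, IsUnit (M t).det)
    (hMdsymm : ∀ t ∈ J, (Md t).IsSymm) (hMdinv : ∀ t ∈ J, IsUnit (Md t).det)
    (J₂ : ℝ → Matrix (Fin n) (Fin n) ℝ)
    (hJ₂ : ∀ t ∈ J, (J₂ t)ᵀ = -(J₂ t))
    (G : Matrix (Fin n) (Fin m) ℝ) (Kv : Matrix (Fin m) (Fin m) ℝ)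
    (hKv : Kv.IsSymm)
    (hqdyn : ∀ t ∈ J,
      HasDerivAt q (((M t)⁻¹ * Md t).mulVec (gradp (q t) (p t))) t)
    (hpdyn : ∀ t ∈ J,
      HasDerivAt p (-((Md t * (M t)⁻¹).mulVec (gradq (q t) (p t)))
        + (J₂ t - G * Kv * Gᵀ).mulVec (gradp (q t) (p t))) t) :
    ∀ t ∈ J,
      HasDerivAt (fun s => Hd (q s) (p s))
        (-(gradp (q t) (p t) ⬝ᵥ (G * Kv * Gᵀ).mulVec (gradp (q t) (p t)))) t := by
  intro t ht
  set gq := gradq (q t) (p t)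
  set gp := gradp (q t) (p t)
  have hz : HasDerivAt (fun s => (q s, p s))
      (((M t)⁻¹ * Md t).mulVec gp,
       -((Md t * (M t)⁻¹).mulVec gq) + (J₂ t - G * Kv * Gᵀ).mulVec gp) t :=
    HasDerivAt.prodMk (hqdyn t ht) (hpdyn t ht)
  have hHdiff : DifferentiableAt ℝ
      (fun z : (Fin n → ℝ) × (Fin n → ℝ) => Hd z.1 z.2) (q t, p t) :=
    (hHdC1.differentiable one_ne_zero).differentiableAt
  have hcomp := (hHdiff.hasFDerivAt).comp_hasDerivAt t hz
  have key : fderiv ℝ (fun z : (Fin n → ℝ) × (Fin n → ℝ) => Hd z.1 z.2) (q t, p t)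
      (((M t)⁻¹ * Md t).mulVec gp,
       -((Md t * (M t)⁻¹).mulVec gq) + (J₂ t - G * Kv * Gᵀ).mulVec gp)
      = -(gp ⬝ᵥ (G * Kv * Gᵀ).mulVec gp) := by
    rw [hgrad]
    have h1 : gq ⬝ᵥ ((M t)⁻¹ * Md t).mulVec gp
        = gp ⬝ᵥ (Md t * (M t)⁻¹).mulVec gq := by
      rw [dotProduct_mulVec, ← mulVec_transpose, dotProduct_comm]
      congr 1
      rw [transpose_mul, transpose_nonsing_inv, (hMsymm t ht).eq, (hMdsymm t ht).eq]
    have h2 : gp ⬝ᵥ (J₂ t).mulVec gp = 0 := by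
      have : gp ⬝ᵥ (J₂ t).mulVec gp = -(gp ⬝ᵥ (J₂ t).mulVec gp) := by
        conv_lhs => rw [dotProduct_mulVec, ← mulVec_transpose, hJ₂ t ht,
          neg_mulVec, neg_dotProduct, dotProduct_comm]
      linarith
    rw [sub_mulVec, dotProduct_add, dotProduct_sub, h1, h2, dotProduct_neg]
    ring
  rw [key] at hcomp
  exact hcomp
end
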